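/- Each map Φ_s is a K-algebra homomorphism of K[S], Φ_0 is the identity, and Φ_s ∘ Φ_t = Φ_{s+t} for all s, t ∈ K; in particular every Φ_s is a K-algebra automorphism of K[S]. (This is the one-parameter additive group of automorphisms, i.e. the G_a-action, attached to the Demazure root μ.) -/

import Mathlib

open AddMonoidAlgebra Finset

lemma aux_binom {K R : Type*} [CommSemiring K] [CommRing R] [Algebra K R]
    (X Y : R) (s t : K) (A : ℕ) :
    ∑ n ∈ Finset.range (A + 1), ((A.choose n : K) * t ^ n) • (Y * X ^ n * (1 + s • X) ^ (A - n))
      = Y * (1 + (s + t) • X) ^ A := by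
  have h : (1 : R) + (s + t) • X = t • X + (1 + s • X) := by
    rw [add_smul]; ring
  rw [h, add_pow, Finset.mul_sum]
  refine Finset.sum_congr rfl fun n hn => ?_
  simp only [Algebra.smul_def, map_mul, map_pow, map_natCast, mul_pow]
  ring

lemma aux_binom' {K R : Type*} [CommSemiring K] [CommRing R] [Algebra K R]
    (X Y : R) (s : K) (A : ℕ) :
    ∑ n ∈ Finset.range (A + 1), ((A.choose n : K) * s ^ n) • (Y * X ^ n)
      = Y * (1 + s • X) ^ A := by
  have := aux_binom X Y (0 : K) s A
  simpa using this

/-- The maps `Φ_s` with `Φ_s f_λ = ∑_{n=0}^{ρ(λ)} C(ρ(λ),n) s^n f_{λ+nμ}` form a one-parameter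
group of `K`-algebra automorphisms of `K[S]`: each `Φ_s` is a `K`-algebra homomorphism, `Φ_0` is
the identity, `Φ_s ∘ Φ_t = Φ_{s+t}`, and every `Φ_s` is bijective. -/
theorem stmt3 {K M : Type*} [Field K] [CharZero K] [AddCommGroup M]
    [Module.Free ℤ M] [Module.Finite ℤ M]
    (S : AddSubmonoid M) (ρ : M →+ ℤ) (μ : M)
    (h1 : ∀ l ∈ S, 0 ≤ ρ l) (h2 : ρ μ = -1)
    (h3 : ∀ l ∈ S, 0 < ρ l → l + μ ∈ S)
    -- `σ l n` is the element `λ + nμ` of `S`, for `0 ≤ n ≤ ρ(λ)`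
    (σ : S → ℕ → S)
    (hσ : ∀ (l : S) (n : ℕ), (n : ℤ) ≤ ρ (l : M) → ((σ l n : M) = (l : M) + n • μ))
    (Φ : K → (AddMonoidAlgebra K S →ₗ[K] AddMonoidAlgebra K S))
    (hΦ : ∀ (s : K) (l : S), Φ s (of' K S l) =
      ∑ n ∈ Finset.range ((ρ (l : M)).toNat + 1),
        (((ρ (l : M)).toNat.choose n : K) * s ^ n) • of' K S (σ l n)) :
    (∀ s : K, ∀ a b : AddMonoidAlgebra K S, Φ s (a * b) = Φ s a * Φ s b)
    ∧ (∀ s : K, Φ s 1 = 1)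
    ∧ Φ 0 = LinearMap.id
    ∧ (∀ s t : K, (Φ s).comp (Φ t) = Φ (s + t))
    ∧ (∀ s : K, Function.Bijective (Φ s)) := by
  classical
  set A : S → ℕ := fun l => (ρ (l : M)).toNat with hA
  have hΦ' : ∀ (s : K) (l : S), Φ s (of' K S l) =
      ∑ n ∈ Finset.range (A l + 1), (((A l).choose n : K) * s ^ n) • of' K S (σ l n) := hΦ
  have hnn : ∀ l : S, 0 ≤ ρ (l : M) := fun l => h1 l l.2
  have hAcast : ∀ l : S, ((A l : ℤ)) = ρ (l : M) := fun l => Int.toNat_of_nonneg (hnn l)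
  have hσcoe : ∀ (l : S) (n : ℕ), n ≤ A l → ((σ l n : M) = (l : M) + n • μ) := by
    intro l n hn
    exact hσ l n (by rw [← hAcast l]; exact_mod_cast hn)
  -- the embedding ι : K[S] → K[M]
  set ι : AddMonoidAlgebra K S →ₐ[K] AddMonoidAlgebra K M :=
    mapDomainAlgHom K K S.subtype with hιdef
  have hιinj : Function.Injective ι := by
    have : Function.Injective (S.subtype : S → M) := Subtype.val_injective
    intro a b hab
    exact AddMonoidAlgebra.mapDomain_injective (R := K) this hab
  have hιof : ∀ l : S, ι (of' K S l) = of' K M (l : M) := by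
    intro l
    simp [hιdef, of'_apply, Finsupp.mapDomain_single]
  -- the element X = f_μ in K[M]
  set X : AddMonoidAlgebra K M := of' K M μ with hX
  have hofpow : ∀ (m : M) (n : ℕ), of' K M m * X ^ n = of' K M (m + n • μ) := by
    intro m n
    rw [hX, of'_apply, of'_apply, of'_apply, single_pow, single_mul_single, one_mul, one_pow]
  have hofmul : ∀ a b : S, of' K S a * of' K S b = of' K S (a + b) := by
    intro a b
    rw [of'_apply, of'_apply, of'_apply, single_mul_single, one_mul]
  -- image of Φ s on basis vectors
  have hkey : ∀ (s : K) (l : S),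
      ι (Φ s (of' K S l)) = of' K M (l : M) * (1 + s • X) ^ (A l) := by
    intro s l
    rw [hΦ', map_sum, ← aux_binom' X (of' K M (l : M)) s (A l)]
    refine Finset.sum_congr rfl fun n hn => ?_
    rw [Finset.mem_range, Nat.lt_succ_iff] at hn
    rw [map_smul, hιof, hofpow, hσcoe l n hn]
  -- A is additive
  have hAadd : ∀ l m : S, A (l + m) = A l + A m := by
    intro l m
    have h : ρ ((l + m : S) : M) = ρ (l : M) + ρ (m : M) := by
      rw [AddSubmonoid.coe_add, map_add]
    have := hnn l
    have := hnn m
    simp only [hA] at *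
    omega
  -- ρ drops by n along σ
  have hAσ : ∀ (l : S) (n : ℕ), n ≤ A l → A (σ l n) = A l - n := by
    intro l n hn
    have h : ρ ((σ l n : S) : M) = ρ (l : M) - n := by
      rw [hσcoe l n hn, map_add, AddMonoidHom.map_nsmul, h2]
      simp [sub_eq_add_neg]
    have := hAcast l
    simp only [hA] at *
    omega
  -- multiplicativity on basis vectors
  have hofmulM : ∀ a b : M, of' K M a * of' K M b = of' K M (a + b) := by
    intro a b
    rw [of'_apply, of'_apply, of'_apply, single_mul_single, one_mul]
  have hmul_basis : ∀ (s : K) (l m : S),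
      Φ s (of' K S l * of' K S m) = Φ s (of' K S l) * Φ s (of' K S m) := by
    intro s l m
    apply hιinj
    rw [map_mul ι, hofmul, hkey, hkey, hkey, AddSubmonoid.coe_add, hAadd, pow_add, ← hofmulM]
    ring
  -- multiplicativity in general
  have hmul : ∀ (s : K) (a b : AddMonoidAlgebra K S), Φ s (a * b) = Φ s a * Φ s b := by
    intro s a b
    have hsingle : ∀ (l : S) (c : K),
        (AddMonoidAlgebra.single l c : AddMonoidAlgebra K S) = c • of' K S l := by
      intro l c
      rw [of'_apply, AddMonoidAlgebra.smul_single', mul_one]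
    induction a using AddMonoidAlgebra.induction_linear with
    | zero => simp
    | add f g hf hg => rw [add_mul, map_add, map_add, hf, hg, add_mul]
    | single l c =>
      induction b using AddMonoidAlgebra.induction_linear with
      | zero => simp
      | add f g hf hg => rw [mul_add, map_add, map_add, hf, hg, mul_add]
      | single m d =>
        rw [hsingle l c, hsingle m d, smul_mul_smul_comm, map_smul, map_smul, map_smul,
          hmul_basis, smul_mul_smul_comm]
  -- unitality
  have hone : ∀ s : K, Φ s 1 = 1 := by
    intro s
    have h0 : ((0 : S) : M) = 0 := rfl
    have hA0 : A 0 = 0 := by simp [hA, h0]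
    have hσ0 : σ 0 0 = 0 := by
      apply Subtype.ext
      rw [hσcoe 0 0 (by omega)]
      simp [h0]
    have hone' : (1 : AddMonoidAlgebra K S) = of' K S 0 := by
      rw [of'_apply]; rfl
    rw [hone', hΦ' s 0, hA0, Finset.sum_range_one, hσ0]
    simp only [Nat.choose_self, Nat.cast_one, pow_zero, mul_one, one_smul]
  -- Φ 0 is the identity
  have hid : Φ 0 = (LinearMap.id : AddMonoidAlgebra K S →ₗ[K] AddMonoidAlgebra K S) := by
    refine AddMonoidAlgebra.lhom_ext' fun l => LinearMap.ext fun c => ?_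
    have hsingle : (AddMonoidAlgebra.single l c : AddMonoidAlgebra K S) = c • of' K S l := by
      rw [of'_apply, AddMonoidAlgebra.smul_single', mul_one]
    show Φ 0 (AddMonoidAlgebra.single l c) = AddMonoidAlgebra.single l c
    rw [hsingle, map_smul, hΦ' 0 l, Finset.sum_eq_single 0]
    · have hσl0 : σ l 0 = l := by
        apply Subtype.ext
        rw [hσcoe l 0 (by omega)]
        simp
      rw [hσl0]
      simp only [Nat.choose_zero_right, Nat.cast_one, pow_zero, mul_one, one_smul]
    · intro n _ hn
      rw [zero_pow hn, mul_zero, zero_smul]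
    · intro h
      exact absurd (Finset.mem_range.2 (Nat.succ_pos _)) h
  -- composition law
  have hcomp : ∀ s t : K, (Φ s).comp (Φ t) = Φ (s + t) := by
    intro s t
    refine AddMonoidAlgebra.lhom_ext' fun l => LinearMap.ext fun c => ?_
    have hsingle : (AddMonoidAlgebra.single l c : AddMonoidAlgebra K S) = c • of' K S l := by
      rw [of'_apply, AddMonoidAlgebra.smul_single', mul_one]
    have key2 : Φ s (Φ t (of' K S l)) = Φ (s + t) (of' K S l) := by
      apply hιinj
      rw [hΦ' t l, map_sum, map_sum]
      calc
        ∑ n ∈ Finset.range (A l + 1), ι (Φ s ((((A l).choose n : K) * t ^ n) • of' K S (σ l n)))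
            = ∑ n ∈ Finset.range (A l + 1),
                (((A l).choose n : K) * t ^ n) •
                  (of' K M (l : M) * X ^ n * (1 + s • X) ^ (A l - n)) := by
          refine Finset.sum_congr rfl fun n hn => ?_
          rw [Finset.mem_range, Nat.lt_succ_iff] at hn
          rw [map_smul, map_smul, hkey, hAσ l n hn, hσcoe l n hn, ← hofpow]
        _ = of' K M (l : M) * (1 + (s + t) • X) ^ (A l) :=
          aux_binom X (of' K M (l : M)) s t (A l)
        _ = ι (Φ (s + t) (of' K S l)) := (hkey (s + t) l).symm
    show (Φ s).comp (Φ t) (AddMonoidAlgebra.single l c) = Φ (s + t) (AddMonoidAlgebra.single l c)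
    rw [hsingle, map_smul, map_smul, LinearMap.comp_apply]
    exact congrArg (fun z => c • z) key2
  -- bijectivity
  have hbij : ∀ s : K, Function.Bijective (Φ s) := by
    intro s
    have h₁ := hcomp s (-s)
    have h₂ := hcomp (-s) s
    rw [add_neg_cancel, hid] at h₁
    rw [neg_add_cancel, hid] at h₂
    refine Function.bijective_iff_has_inverse.2 ⟨Φ (-s), fun a => ?_, fun a => ?_⟩
    · exact DFunLike.congr_fun h₂ a
    · exact DFunLike.congr_fun h₁ a
  exact ⟨hmul, hone, hid, hcomp, hbij⟩
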